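/- Let the process be φ-mixing. Let n ∈ ℕ, let A ∈ 𝒞^n be an n-cylinder with ℙ(A) > 0, and set f_A = 1/(2ℙ(A)). Then for every integer k ≥ 1, |ℙ_A(τ_A > k f_A) − ℙ_A(τ_A > f_A) ℙ(τ_A > f_A)^{k−1}| ≤ 2 ε(A) (k−1) ℙ_A(τ_A > f_A − 2n) [ℙ(τ_A > f_A − 2n) + φ(n)]^{k−2}. -/

import Mathlib

open MeasureTheory ProbabilityTheory Set Filter ENNReal

namespace ReturnTimes

variable {𝒞 : Type*}

/-- Bi-infinite sequences over the alphabet `𝒞`. -/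
abbrev Omega (𝒞 : Type*) := ℤ → 𝒞

/-- The shift `T^k`: `(shiftk k x) m = x (m + k)`.  Thus `T = shiftk 1` and
`T^{-k} A = shiftk k ⁻¹' A`. -/
def shiftk (k : ℤ) (x : Omega 𝒞) : Omega 𝒞 := fun m => x (m + k)

/-- Stationarity: `ℙ` is invariant under the shift. -/
def Stationary [MeasurableSpace 𝒞] (μ : MeasureTheory.Measure (Omega 𝒞)) : Prop :=
  ∀ S : Set (Omega 𝒞), μ (shiftk 1 ⁻¹' S) = μ S

/-- The `n`-cylinder `A = {X_0 = a_0, …, X_{n-1} = a_{n-1}}` given by the word `a`. -/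
def cyl (n : ℕ) (a : ℕ → 𝒞) : Set (Omega 𝒞) := {x | ∀ i < n, x (i : ℤ) = a i}

/-- `A^{(w)} = {X_{n-w} = a_{n-w}, …, X_{n-1} = a_{n-1}}`, the cylinder on the last `w`
symbols of the word `a` (equal to `univ` when `w = 0`). -/
def cylLast (n w : ℕ) (a : ℕ → 𝒞) : Set (Omega 𝒞) :=
  {x | ∀ i : ℕ, n - w ≤ i → i < n → x (i : ℤ) = a i}

/-- The event `{τ_A > t}` for a real `t`, where `τ_A(x) = inf {k ≥ 1 : T^k x ∈ A}`. -/
def tauGT (A : Set (Omega 𝒞)) (t : ℝ) : Set (Omega 𝒞) :=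
  {x | ∀ k : ℕ, 1 ≤ k → (k : ℝ) ≤ t → shiftk (k : ℤ) x ∉ A}

/-- The hitting time `τ_A(x) = inf {k ≥ 1 : T^k x ∈ A}`, with values in `ℕ∞`
(`⊤` if the point never hits `A`). -/
noncomputable def tau (A : Set (Omega 𝒞)) (x : Omega 𝒞) : ℕ∞ :=
  sInf {e : ℕ∞ | ∃ k : ℕ, e = (k : ℕ∞) ∧ 1 ≤ k ∧ shiftk (k : ℤ) x ∈ A}

/-- The period `p_A = min {k ∈ {1,…,n} : A ∩ T^{-k} A ≠ ∅}`. -/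
noncomputable def period (n : ℕ) (A : Set (Omega 𝒞)) : ℕ :=
  sInf {k : ℕ | 1 ≤ k ∧ k ≤ n ∧ (A ∩ shiftk (k : ℤ) ⁻¹' A).Nonempty}

/-- The secondary periods `ℛ(A) = {k ∈ {⌊n/p_A⌋ p_A + 1, …, n-1} : A ∩ T^{-k} A ≠ ∅}`. -/
noncomputable def secondary (n : ℕ) (A : Set (Omega 𝒞)) : Set ℕ :=
  {k : ℕ | (n / period n A) * period n A < k ∧ k < n ∧ (A ∩ shiftk (k : ℤ) ⁻¹' A).Nonempty}

open Classical in
/-- `n_A = min ℛ(A)` if `ℛ(A) ≠ ∅`, and `n_A = n` otherwise. -/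
noncomputable def nA (n : ℕ) (A : Set (Omega 𝒞)) : ℕ :=
  if (secondary n A).Nonempty then sInf (secondary n A) else n

/-- The σ-algebra `ℱ_I` generated by the coordinates with indices in `I`. -/
def coordAlg [MeasurableSpace 𝒞] (I : Set ℤ) : MeasurableSpace (Omega 𝒞) :=
  ⨆ i ∈ I, MeasurableSpace.comap (fun x : Omega 𝒞 => x i) inferInstance

/-- φ-mixing: `φ l` bounds `|ℙ_B(C) - ℙ(C)|` for all `B ∈ ℱ_{{0,…,n}}` with `ℙ(B) > 0`
and all `C ∈ ℱ_{{m : m ≥ n + l + 1}}`, and `φ l → 0` as `l → ∞`. -/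
def IsPhiMixing [MeasurableSpace 𝒞] (μ : MeasureTheory.Measure (Omega 𝒞)) (φ : ℕ → ℝ) : Prop :=
  Tendsto φ atTop (nhds 0) ∧
  ∀ (l n : ℕ) (B C : Set (Omega 𝒞)),
    MeasurableSet[coordAlg (Set.Icc (0 : ℤ) (n : ℤ))] B → 0 < μ B →
    MeasurableSet[coordAlg {i : ℤ | (n : ℤ) + (l : ℤ) + 1 ≤ i}] C →
    |(μ[|B] C).toReal - (μ C).toReal| ≤ φ l

/-- `ζ_A = ℙ_A(τ_A ≠ p_A)`. -/
noncomputable def zeta [MeasurableSpace 𝒞] (μ : MeasureTheory.Measure (Omega 𝒞)) (n : ℕ)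
    (A : Set (Omega 𝒞)) : ℝ :=
  (μ[|A] {x | tau A x ≠ (period n A : ℕ∞)}).toReal

/-- `ε(A) = inf_{0 ≤ w ≤ n_A} [(2n + p_A) ℙ(A^{(w)}) + φ(n_A - w)]`. -/
noncomputable def epsA [MeasurableSpace 𝒞] (μ : MeasureTheory.Measure (Omega 𝒞)) (φ : ℕ → ℝ)
    (n : ℕ) (a : ℕ → 𝒞) : ℝ :=
  (Finset.Iic (nA n (cyl n a))).inf' Finset.nonempty_Iic
    (fun w => ((2 * n + period n (cyl n a) : ℕ) : ℝ) * (μ (cylLast n w a)).toReal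
       + φ (nA n (cyl n a) - w))

/-- `f(A,t) = ℙ(A) t e^{-(ζ_A - 16 ε(A)) ℙ(A) t}`. -/
noncomputable def fAt [MeasurableSpace 𝒞] (μ : MeasureTheory.Measure (Omega 𝒞)) (φ : ℕ → ℝ)
    (n : ℕ) (a : ℕ → 𝒞) (t : ℝ) : ℝ :=
  (μ (cyl n a)).toReal * t *
    Real.exp (-(zeta μ n (cyl n a) - 16 * epsA μ φ n a) * (μ (cyl n a)).toReal * t)

/-- The sojourn time `S_A(x) = sup {k : x ∈ A ∩ T^{-j p_A} A for all j = 1,…,k}` (here `p`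
stands for the period `p_A`), with values in `ℕ∞` and `S_A(x) = 0` when the set is empty. -/
noncomputable def sojourn (p : ℕ) (A : Set (Omega 𝒞)) (x : Omega 𝒞) : ℕ∞ :=
  sSup {e : ℕ∞ | ∃ k : ℕ, e = (k : ℕ∞) ∧
    ∀ j : ℕ, 1 ≤ j → j ≤ k → x ∈ A ∩ shiftk ((j * p : ℕ) : ℤ) ⁻¹' A}

/-- `ρ_i(A) = ℙ(A | ∩_{j=1}^{i} T^{j p_A} A)` (here `p` stands for the period `p_A`;
note `T^{j} A = shiftk (-j) ⁻¹' A` since `T` is invertible). -/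
noncomputable def rho [MeasurableSpace 𝒞] (μ : MeasureTheory.Measure (Omega 𝒞)) (p : ℕ)
    (A : Set (Omega 𝒞)) (i : ℕ) : ℝ :=
  (μ[| ⋂ j ∈ Finset.Icc 1 i, shiftk (-((j * p : ℕ) : ℤ)) ⁻¹' A] A).toReal



section Aux

variable [MeasurableSpace 𝒞]

lemma shiftk_apply (r : ℤ) (x : Omega 𝒞) (m : ℤ) : shiftk r x m = x (m + r) := rfl

lemma shiftk_shiftk (r d : ℤ) (x : Omega 𝒞) :
    shiftk d (shiftk r x) = shiftk (r + d) x := by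
  funext m; simp [shiftk, add_assoc, add_comm d r]

lemma stat_nat {μ : MeasureTheory.Measure (Omega 𝒞)} (hstat : Stationary μ) (r : ℕ)
    (E : Set (Omega 𝒞)) : μ (shiftk (r : ℤ) ⁻¹' E) = μ E := by
  induction r generalizing E with
  | zero =>
    have : shiftk (0 : ℤ) ⁻¹' E = E := by
      ext x
      have hx : shiftk (0 : ℤ) x = x := by funext m; simp [shiftk]
      simp [Set.mem_preimage, hx]
    rw [Nat.cast_zero, this]
  | succ r ih =>
    have h1 : shiftk ((r + 1 : ℕ) : ℤ) ⁻¹' E = shiftk (r : ℤ) ⁻¹' (shiftk 1 ⁻¹' E) := by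
      ext x
      have h2 : shiftk 1 (shiftk (r : ℤ) x) = shiftk ((r + 1 : ℕ) : ℤ) x := by
        rw [shiftk_shiftk]; norm_num
      simp only [Set.mem_preimage, ← h2]
    rw [h1, ih (shiftk 1 ⁻¹' E), hstat E]

lemma coordAlg_le_pi (I : Set ℤ) :
    coordAlg (𝒞 := 𝒞) I ≤ (inferInstance : MeasurableSpace (Omega 𝒞)) := by
  refine iSup₂_le fun i _ => ?_
  rw [MeasurableSpace.comap_le_iff_le_map]
  exact fun s hs => (measurable_pi_apply i) hs

lemma measSet_of_coordAlg {I : Set ℤ} {S : Set (Omega 𝒞)}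
    (h : MeasurableSet[coordAlg I] S) : MeasurableSet S :=
  coordAlg_le_pi I S h

lemma coord_meas {I : Set ℤ} {i : ℤ} (hi : i ∈ I) {S : Set 𝒞} (hS : MeasurableSet S) :
    MeasurableSet[coordAlg I] ((fun x : Omega 𝒞 => x i) ⁻¹' S) := by
  have hle : MeasurableSpace.comap (fun x : Omega 𝒞 => x i) inferInstance ≤ coordAlg I :=
    le_iSup₂ (f := fun (j : ℤ) (_ : j ∈ I) =>
      MeasurableSpace.comap (fun x : Omega 𝒞 => x j) inferInstance) i hi
  exact hle _ ⟨S, hS, rfl⟩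

lemma coord_eq_meas {I : Set ℤ} {i : ℤ} (hi : i ∈ I) {c : 𝒞} (hc : MeasurableSet ({c} : Set 𝒞)) :
    MeasurableSet[coordAlg I] {x : Omega 𝒞 | x i = c} := by
  have h := coord_meas (𝒞 := 𝒞) hi hc
  have he : ((fun x : Omega 𝒞 => x i) ⁻¹' {c}) = {x : Omega 𝒞 | x i = c} := by
    ext x; simp
  rwa [he] at h

end Aux


section Aux2

variable [MeasurableSpace 𝒞]

/-- No hit of the cylinder in the integer time window `(r, s]`. -/
def Nwin (n : ℕ) (a : ℕ → 𝒞) (r s : ℕ) : Set (Omega 𝒞) :=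
  {x | ∀ d : ℕ, r < d → d ≤ s → shiftk (d : ℤ) x ∉ cyl n a}

/-- Some hit of the reduced cylinder `A^{(w)}` in the integer time window `(r, s]`. -/
def Win (n w : ℕ) (a : ℕ → 𝒞) (r s : ℕ) : Set (Omega 𝒞) :=
  ⋃ d ∈ Set.Ioc r s, shiftk (d : ℤ) ⁻¹' cylLast n w a

lemma tauGT_eq_Nwin (n : ℕ) (a : ℕ → 𝒞) {t : ℝ} (ht : 0 ≤ t) :
    tauGT (cyl n a) t = Nwin n a 0 ⌊t⌋₊ := by
  ext x
  simp only [tauGT, Nwin, Set.mem_setOf_eq]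
  constructor
  · intro h d hd1 hd2
    exact h d hd1 (le_trans (by exact_mod_cast Nat.cast_le.2 hd2) (Nat.floor_le ht))
  · intro h d hd1 hd2
    exact h d hd1 (Nat.le_floor hd2)

lemma Nwin_anti (n : ℕ) (a : ℕ → 𝒞) {r s s' : ℕ} (h : s ≤ s') :
    Nwin n a r s' ⊆ Nwin n a r s :=
  fun x hx d hd1 hd2 => hx d hd1 (le_trans hd2 h)

lemma Nwin_shift (n : ℕ) (a : ℕ → 𝒞) (r s : ℕ) :
    Nwin n a r (r + s) = shiftk (r : ℤ) ⁻¹' Nwin n a 0 s := by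
  ext x
  simp only [Nwin, Set.mem_preimage, Set.mem_setOf_eq]
  constructor
  · intro h d hd1 hd2
    have hsh : shiftk (d : ℤ) (shiftk (r : ℤ) x) = shiftk ((r + d : ℕ) : ℤ) x := by
      rw [shiftk_shiftk]; norm_num
    rw [hsh]
    exact h (r + d) (by omega) (by omega)
  · intro h d hd1 hd2
    have hd' : d = r + (d - r) := by omega
    have hsh : shiftk ((d - r : ℕ) : ℤ) (shiftk (r : ℤ) x) = shiftk (d : ℤ) x := by
      rw [shiftk_shiftk, ← Nat.cast_add]
      exact congrArg (fun z : ℕ => shiftk (z : ℤ) x) (by omega)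
    rw [← hsh]
    exact h (d - r) (by omega) (by omega)

lemma Nwin_measure_shift {μ : MeasureTheory.Measure (Omega 𝒞)} (hstat : Stationary μ)
    (n : ℕ) (a : ℕ → 𝒞) (r s : ℕ) :
    μ (Nwin n a r (r + s)) = μ (Nwin n a 0 s) := by
  rw [Nwin_shift, stat_nat hstat]

lemma shift_cyl_eq (n : ℕ) (a : ℕ → 𝒞) (d : ℕ) :
    shiftk (d : ℤ) ⁻¹' cyl n a = ⋂ i ∈ Set.Iio n, {x : Omega 𝒞 | x ((i : ℤ) + (d : ℤ)) = a i} := by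
  ext x
  simp only [Set.mem_preimage, cyl, Set.mem_setOf_eq, Set.mem_iInter, Set.mem_Iio]
  exact ⟨fun h i hi => h i hi, fun h i hi => h i hi⟩

lemma shift_cylLast_eq (n w : ℕ) (a : ℕ → 𝒞) (d : ℕ) :
    shiftk (d : ℤ) ⁻¹' cylLast n w a
      = ⋂ i ∈ Set.Ico (n - w) n, {x : Omega 𝒞 | x ((i : ℤ) + (d : ℤ)) = a i} := by
  ext x
  simp only [Set.mem_preimage, cylLast, Set.mem_setOf_eq, Set.mem_iInter, Set.mem_Ico]
  exact ⟨fun h i hi => h i hi.1 hi.2, fun h i h1 h2 => h i ⟨h1, h2⟩⟩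

lemma meas_shift_cyl {n : ℕ} {a : ℕ → 𝒞} (hsing : ∀ i < n, MeasurableSet ({a i} : Set 𝒞))
    (d : ℕ) {I : Set ℤ} (hI : ∀ i, i < n → ((i : ℤ) + (d : ℤ)) ∈ I) :
    MeasurableSet[coordAlg I] (shiftk (d : ℤ) ⁻¹' cyl n a) := by
  rw [shift_cyl_eq]
  exact MeasurableSet.biInter (Set.to_countable _)
    (fun i hi => coord_eq_meas (hI i hi) (hsing i hi))

lemma meas_shift_cylLast {n : ℕ} {a : ℕ → 𝒞} (hsing : ∀ i < n, MeasurableSet ({a i} : Set 𝒞))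
    (w d : ℕ) {I : Set ℤ} (hI : ∀ i, n - w ≤ i → i < n → ((i : ℤ) + (d : ℤ)) ∈ I) :
    MeasurableSet[coordAlg I] (shiftk (d : ℤ) ⁻¹' cylLast n w a) := by
  rw [shift_cylLast_eq]
  exact MeasurableSet.biInter (Set.to_countable _)
    (fun i hi => coord_eq_meas (hI i hi.1 hi.2) (hsing i hi.2))

lemma Nwin_eq_iInter (n : ℕ) (a : ℕ → 𝒞) (r s : ℕ) :
    Nwin n a r s = ⋂ d ∈ Set.Ioc r s, (shiftk (d : ℤ) ⁻¹' cyl n a)ᶜ := by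
  ext x
  simp only [Nwin, Set.mem_setOf_eq, Set.mem_iInter, Set.mem_Ioc, Set.mem_compl_iff,
    Set.mem_preimage]
  exact ⟨fun h d hd => h d hd.1 hd.2, fun h d h1 h2 => h d ⟨h1, h2⟩⟩

lemma meas_Nwin {n : ℕ} {a : ℕ → 𝒞} (hsing : ∀ i < n, MeasurableSet ({a i} : Set 𝒞))
    (r s : ℕ) {I : Set ℤ}
    (hI : ∀ d i, r < d → d ≤ s → i < n → ((i : ℤ) + (d : ℤ)) ∈ I) :
    MeasurableSet[coordAlg I] (Nwin n a r s) := by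
  rw [Nwin_eq_iInter]
  exact MeasurableSet.biInter (Set.to_countable _)
    (fun d hd => (meas_shift_cyl hsing d (fun i hi => hI d i hd.1 hd.2 hi)).compl)

lemma meas_Win {n : ℕ} {a : ℕ → 𝒞} (hsing : ∀ i < n, MeasurableSet ({a i} : Set 𝒞))
    (w r s : ℕ) {I : Set ℤ}
    (hI : ∀ d i, r < d → d ≤ s → n - w ≤ i → i < n → ((i : ℤ) + (d : ℤ)) ∈ I) :
    MeasurableSet[coordAlg I] (Win n w a r s) := by
  refine MeasurableSet.biUnion (Set.to_countable _) (fun d hd => ?_)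
  exact meas_shift_cylLast hsing w d (fun i h1 h2 => hI d i hd.1 hd.2 h1 h2)

lemma phi_nonneg {μ : MeasureTheory.Measure (Omega 𝒞)} [IsProbabilityMeasure μ] {φ : ℕ → ℝ}
    (hmix : IsPhiMixing μ φ) (l : ℕ) : 0 ≤ φ l := by
  have h := hmix.2 l 0 Set.univ Set.univ MeasurableSet.univ
    (by rw [measure_univ]; exact one_pos) MeasurableSet.univ
  rw [cond_univ] at h
  simpa using h

lemma win_bound {μ : MeasureTheory.Measure (Omega 𝒞)} [IsProbabilityMeasure μ]
    (hstat : Stationary μ) (n w : ℕ) (a : ℕ → 𝒞) (r s : ℕ) :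
    (μ (Win n w a r s)).toReal ≤ ((s - r : ℕ) : ℝ) * (μ (cylLast n w a)).toReal := by
  have h1 : Win n w a r s = ⋃ d ∈ Finset.Ioc r s, shiftk (d : ℤ) ⁻¹' cylLast n w a := by
    simp [Win, Finset.mem_Ioc, Set.mem_Ioc]
  have h2 : μ (Win n w a r s) ≤ ((s - r : ℕ) : ℝ≥0∞) * μ (cylLast n w a) := by
    rw [h1]
    refine le_trans (measure_biUnion_finset_le _ _) ?_
    have h3 : ∀ d ∈ Finset.Ioc r s, μ (shiftk (d : ℤ) ⁻¹' cylLast n w a) = μ (cylLast n w a) :=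
      fun d _ => stat_nat hstat d _
    rw [Finset.sum_congr rfl h3, Finset.sum_const, Nat.card_Ioc, nsmul_eq_mul]
  calc (μ (Win n w a r s)).toReal
      ≤ (((s - r : ℕ) : ℝ≥0∞) * μ (cylLast n w a)).toReal := by
        refine ENNReal.toReal_mono ?_ h2
        exact ENNReal.mul_ne_top (ENNReal.natCast_ne_top _) (measure_ne_top μ _)
    _ = ((s - r : ℕ) : ℝ) * (μ (cylLast n w a)).toReal := by
        rw [ENNReal.toReal_mul, ENNReal.toReal_natCast]

lemma mix_bounds {μ : MeasureTheory.Measure (Omega 𝒞)} [IsProbabilityMeasure μ] {φ : ℕ → ℝ}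
    (hmix : IsPhiMixing μ φ) (l ν : ℕ) {B C : Set (Omega 𝒞)}
    (hB : MeasurableSet[coordAlg (Set.Icc (0 : ℤ) (ν : ℤ))] B)
    (hC : MeasurableSet[coordAlg {i : ℤ | (ν : ℤ) + (l : ℤ) + 1 ≤ i}] C) :
    (μ (B ∩ C)).toReal ≤ (μ B).toReal * ((μ C).toReal + φ l) ∧
    (μ B).toReal * ((μ C).toReal - φ l) ≤ (μ (B ∩ C)).toReal := by
  by_cases h0 : μ B = 0
  · have hBC : μ (B ∩ C) = 0 :=
      le_antisymm (le_trans (measure_mono Set.inter_subset_left) h0.le) (zero_le)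
    rw [hBC, h0]
    simp
  · have hpos : 0 < μ B := lt_of_le_of_ne zero_le (Ne.symm h0)
    have happly := hmix.2 l ν B C hB hpos hC
    have hBmeas : MeasurableSet B := measSet_of_coordAlg hB
    rw [cond_apply hBmeas μ C] at happly
    have hBR : 0 < (μ B).toReal := ENNReal.toReal_pos h0 (measure_ne_top μ B)
    have htr : ((μ B)⁻¹ * μ (B ∩ C)).toReal = (μ (B ∩ C)).toReal / (μ B).toReal := by
      rw [ENNReal.toReal_mul, ENNReal.toReal_inv]
      ring
    rw [htr] at happly
    have h1 := (abs_le.mp happly).1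
    have h2 := (abs_le.mp happly).2
    constructor
    · have h3 : (μ (B ∩ C)).toReal / (μ B).toReal ≤ (μ C).toReal + φ l := by linarith
      rw [div_le_iff₀ hBR] at h3
      linarith [h3]
    · have h3 : (μ C).toReal - φ l ≤ (μ (B ∩ C)).toReal / (μ B).toReal := by linarith
      rw [le_div_iff₀ hBR] at h3
      linarith [h3]

end Aux2


section Aux3

variable [MeasurableSpace 𝒞]

lemma period_mem (n : ℕ) (hn : 1 ≤ n) (a : ℕ → 𝒞) :
    1 ≤ period n (cyl n a) ∧ period n (cyl n a) ≤ n := by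
  have hwit : n ∈ {k : ℕ | 1 ≤ k ∧ k ≤ n ∧ ((cyl n a) ∩ shiftk (k : ℤ) ⁻¹' (cyl n a)).Nonempty} := by
    refine ⟨hn, le_rfl, ?_⟩
    refine ⟨fun m => a ((m % (n : ℤ)).toNat), ?_, ?_⟩
    · intro i hi
      have h1 : ((i : ℤ) % (n : ℤ)) = (i : ℤ) :=
        Int.emod_eq_of_lt (Int.natCast_nonneg i) (by exact_mod_cast hi)
      simp [h1]
    · intro i hi
      show (fun m : ℤ => a ((m % (n : ℤ)).toNat)) ((i : ℤ) + (n : ℤ)) = a i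
      have h1 : ((i : ℤ) + (n : ℤ)) % (n : ℤ) = (i : ℤ) % (n : ℤ) := by
        have := Int.add_mul_emod_self_left (a := (i : ℤ)) (b := 1) (c := (n : ℤ))
        simpa using this
      have h2 : ((i : ℤ) % (n : ℤ)) = (i : ℤ) :=
        Int.emod_eq_of_lt (Int.natCast_nonneg i) (by exact_mod_cast hi)
      simp [h1, h2]
  have hmem := Nat.sInf_mem ⟨n, hwit⟩
  exact ⟨hmem.1, hmem.2.1⟩

lemma nA_le (n : ℕ) (A : Set (Omega 𝒞)) : nA n A ≤ n := by
  unfold nA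
  split_ifs with h
  · exact (Nat.sInf_mem h).2.1.le
  · exact le_rfl

lemma epsA_nonneg {μ : MeasureTheory.Measure (Omega 𝒞)} [IsProbabilityMeasure μ] {φ : ℕ → ℝ}
    (hmix : IsPhiMixing μ φ) (n : ℕ) (a : ℕ → 𝒞) : 0 ≤ epsA μ φ n a := by
  refine Finset.le_inf' _ _ fun w _ => ?_
  have h1 : (0 : ℝ) ≤ ((2 * n + period n (cyl n a) : ℕ) : ℝ) * (μ (cylLast n w a)).toReal :=
    mul_nonneg (Nat.cast_nonneg _) ENNReal.toReal_nonneg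
  linarith [phi_nonneg hmix (nA n (cyl n a) - w)]

lemma degenerate_case {μ : MeasureTheory.Measure (Omega 𝒞)} [IsProbabilityMeasure μ]
    {n : ℕ} {a : ℕ → 𝒞} {i₀ : ℕ} (hi₀ : i₀ < n) {c : 𝒞} (hc : c ≠ a i₀)
    (hcin : ∀ S : Set 𝒞, MeasurableSet S → a i₀ ∈ S → c ∈ S) :
    (∀ t : ℝ, μ (tauGT (cyl n a) t) = 1) ∧
    (∀ t : ℝ, μ.restrict (cyl n a) (tauGT (cyl n a) t) = μ (cyl n a)) := by
  classical
  set g : Omega 𝒞 → Omega 𝒞 := fun x m => if x m = a i₀ then c else x m with hg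
  have hg_ne : ∀ (x : Omega 𝒞) (m : ℤ), g x m ≠ a i₀ := by
    intro x m
    by_cases h : x m = a i₀ <;> simp [hg, h, hc]
  have hswap : ∀ U : Set (Omega 𝒞), MeasurableSet U → ∀ x, x ∈ U ↔ g x ∈ U := by
    intro U hU
    let m' : MeasurableSpace (Omega 𝒞) :=
      { MeasurableSet' := fun V => ∀ x, x ∈ V ↔ g x ∈ V
        measurableSet_empty := by simp
        measurableSet_compl := by
          intro V hV x
          simp only [Set.mem_compl_iff]
          exact not_congr (hV x)
        measurableSet_iUnion := by
          intro f hf x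
          simp only [Set.mem_iUnion]
          exact exists_congr fun i => hf i x }
    have hle : (MeasurableSpace.pi : MeasurableSpace (Omega 𝒞)) ≤ m' := by
      have hpi : (MeasurableSpace.pi : MeasurableSpace (Omega 𝒞))
          = ⨆ m : ℤ, MeasurableSpace.comap (fun x : Omega 𝒞 => x m)
              (inferInstance : MeasurableSpace 𝒞) := rfl
      rw [hpi]
      refine iSup_le fun m => ?_
      rintro V ⟨S, hS, rfl⟩
      intro x
      simp only [Set.mem_preimage]
      show x m ∈ S ↔ g x m ∈ S
      by_cases h : x m = a i₀
      · have hgx : g x m = c := by simp [hg, h]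
        rw [hgx, h]
        constructor
        · exact fun hS' => hcin S hS hS'
        · intro hcS
          by_contra hnot
          exact (hcin Sᶜ hS.compl hnot) hcS
      · have hgx : g x m = x m := by simp [hg, h]
        rw [hgx]
    have hU' : MeasurableSet[(MeasurableSpace.pi : MeasurableSpace (Omega 𝒞))] U := hU
    exact hle U hU'
  have hgtau : ∀ (t : ℝ) (x : Omega 𝒞), g x ∈ tauGT (cyl n a) t := by
    intro t x k _ _ hmem
    exact hg_ne x ((i₀ : ℤ) + (k : ℤ)) (hmem i₀ hi₀)
  have hU_univ : ∀ (t : ℝ) (U : Set (Omega 𝒞)),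
      tauGT (cyl n a) t ⊆ U → MeasurableSet U → U = Set.univ := by
    intro t U hsub hU
    ext x
    simp only [Set.mem_univ, iff_true]
    exact (hswap U hU x).mpr (hsub (hgtau t x))
  constructor
  · intro t
    refine le_antisymm prob_le_one ?_
    rw [measure_eq_iInf]
    refine le_iInf fun U => le_iInf fun hsub => le_iInf fun hU => ?_
    rw [hU_univ t U hsub hU, measure_univ]
  · intro t
    refine le_antisymm ?_ ?_
    · have h := measure_mono (μ := μ.restrict (cyl n a)) (Set.subset_univ (tauGT (cyl n a) t))
      rwa [Measure.restrict_apply_univ] at h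
    · calc μ (cyl n a)
          ≤ ⨅ (U : Set (Omega 𝒞)) (_ : tauGT (cyl n a) t ⊆ U) (_ : MeasurableSet U),
              μ.restrict (cyl n a) U := by
            refine le_iInf fun U => le_iInf fun hsub => le_iInf fun hU => ?_
            rw [hU_univ t U hsub hU, Measure.restrict_apply_univ]
        _ = μ.restrict (cyl n a) (tauGT (cyl n a) t) := (measure_eq_iInf _).symm

lemma cond_eq_inv_mul {μ : MeasureTheory.Measure (Omega 𝒞)} (A S : Set (Omega 𝒞)) :
    μ[|A] S = (μ A)⁻¹ * μ.restrict A S := by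
  show ((μ A)⁻¹ • μ.restrict A) S = _
  rw [Measure.smul_apply, smul_eq_mul]

end Aux3


section Aux4

variable [MeasurableSpace 𝒞]

lemma shift_zero_preimage (S : Set (Omega 𝒞)) : shiftk ((0 : ℕ) : ℤ) ⁻¹' S = S := by
  ext x
  have h : shiftk ((0 : ℕ) : ℤ) x = x := by funext m; simp [shiftk]
  rw [Set.mem_preimage, h]

lemma meas_cyl {n : ℕ} {a : ℕ → 𝒞} (hsing : ∀ i < n, MeasurableSet ({a i} : Set 𝒞)) :
    MeasurableSet (cyl n a) := by
  have h := meas_shift_cyl (I := Set.univ) hsing 0 (fun _ _ => trivial)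
  have h2 := measSet_of_coordAlg h
  rwa [shift_zero_preimage] at h2

lemma cyl_subset_cylLast (n w : ℕ) (a : ℕ → 𝒞) : cyl n a ⊆ cylLast n w a :=
  fun x hx i _ h2 => hx i h2

lemma epsA_ge {μ : MeasureTheory.Measure (Omega 𝒞)} [IsProbabilityMeasure μ] {φ : ℕ → ℝ}
    (hmix : IsPhiMixing μ φ) (n : ℕ) (hn : 1 ≤ n) (a : ℕ → 𝒞) :
    (2 * (n : ℝ) + 1) * (μ (cyl n a)).toReal ≤ epsA μ φ n a := by
  refine Finset.le_inf' _ _ fun w _ => ?_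
  have h1 : (μ (cyl n a)).toReal ≤ (μ (cylLast n w a)).toReal :=
    ENNReal.toReal_mono (measure_ne_top μ _) (measure_mono (cyl_subset_cylLast n w a))
  have h2 : (2 * (n : ℝ) + 1) ≤ ((2 * n + period n (cyl n a) : ℕ) : ℝ) := by
    have := (period_mem n hn a).1
    push_cast
    have h4 : (1 : ℝ) ≤ (period n (cyl n a) : ℝ) := by exact_mod_cast this
    linarith
  have h3 := phi_nonneg hmix (nA n (cyl n a) - w)
  nlinarith [ENNReal.toReal_nonneg (a := μ (cyl n a)), ENNReal.toReal_nonneg (a := μ (cylLast n w a))]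

end Aux4


section Main

variable [MeasurableSpace 𝒞]

set_option maxHeartbeats 4000000 in
/-- The core iteration estimate, stated for the integer-time events `Nwin`. -/
lemma main_estimate {μ : MeasureTheory.Measure (Omega 𝒞)} [IsProbabilityMeasure μ]
    (hstat : Stationary μ) {φ : ℕ → ℝ} (hmix : IsPhiMixing μ φ)
    (n : ℕ) (hn : 1 ≤ n) (a : ℕ → 𝒞)
    (hsing : ∀ i < n, MeasurableSet ({a i} : Set 𝒞))
    (w : ℕ) (hwle : w ≤ nA n (cyl n a))
    (m : ℕ) (hmge : 2 * n + 1 ≤ m)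
    (t : ℕ → ℕ) (ht1 : t 1 = m)
    (htlo : ∀ j, t j + m ≤ t (j + 1)) (hthi : ∀ j, t (j + 1) ≤ t j + m + 1)
    (htm : ∀ j, 1 ≤ j → m ≤ t j)
    (k : ℕ) (hk : 1 ≤ k) :
    |(μ (cyl n a ∩ Nwin n a 0 (t k))).toReal
        - (μ (cyl n a ∩ Nwin n a 0 m)).toReal * (μ (Nwin n a 0 m)).toReal ^ (k - 1)|
      ≤ 2 * (((2 * n + period n (cyl n a) : ℕ) : ℝ) * (μ (cylLast n w a)).toReal
              + φ (nA n (cyl n a) - w))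
          * ((k - 1 : ℕ) : ℝ) * (μ (cyl n a ∩ Nwin n a 0 (m - 2 * n))).toReal
          * ((μ (Nwin n a 0 (m - 2 * n))).toReal + φ n) ^ (k - 2) := by
  classical
  have hnAle : nA n (cyl n a) ≤ n := nA_le n (cyl n a)
  -- real abbreviations
  set Q : ℝ := (μ (Nwin n a 0 (m - 2 * n))).toReal with hQdef
  set βR : ℝ := (μ (Nwin n a 0 m)).toReal with hβdef
  set Pstar : ℝ := (μ (cylLast n w a)).toReal with hPsdef
  set phistar : ℝ := φ (nA n (cyl n a) - w) with hphisdef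
  set aN : ℕ → ℝ := fun s => (μ (cyl n a ∩ Nwin n a 0 s)).toReal with haNdef
  set b : ℝ := Q + φ n with hbdef
  set eps1 : ℝ := (2 * (n : ℝ) + 1) * Pstar + phistar with heps1def
  set epsw : ℝ := ((2 * n + period n (cyl n a) : ℕ) : ℝ) * Pstar + phistar with hepswdef
  -- positivity and ordering facts
  have hphin : 0 ≤ φ n := phi_nonneg hmix n
  have hphistar0 : 0 ≤ phistar := phi_nonneg hmix _
  have hPstar0 : 0 ≤ Pstar := ENNReal.toReal_nonneg
  have hQ0 : 0 ≤ Q := ENNReal.toReal_nonneg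
  have hβ0 : 0 ≤ βR := ENNReal.toReal_nonneg
  have hb0 : 0 ≤ b := by rw [hbdef]; linarith
  have haN0 : ∀ s, 0 ≤ aN s := fun s => ENNReal.toReal_nonneg
  have haN_mono : ∀ {s s' : ℕ}, s ≤ s' → aN s' ≤ aN s := by
    intro s s' hss
    exact ENNReal.toReal_mono (measure_ne_top μ _)
      (measure_mono (Set.inter_subset_inter_right _ (Nwin_anti n a hss)))
  have hβQ : βR ≤ Q := by
    rw [hβdef, hQdef]
    exact ENNReal.toReal_mono (measure_ne_top μ _)
      (measure_mono (Nwin_anti n a (by omega)))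
  have hβb : βR ≤ b := by rw [hbdef]; linarith
  have hp1 : 1 ≤ period n (cyl n a) := (period_mem n hn a).1
  have heps1w : eps1 ≤ epsw := by
    rw [heps1def, hepswdef]
    have h1 : (2 * (n:ℝ) + 1) ≤ ((2 * n + period n (cyl n a) : ℕ) : ℝ) := by
      push_cast
      have h2 : (1:ℝ) ≤ (period n (cyl n a) : ℝ) := by exact_mod_cast hp1
      linarith
    nlinarith
  have heps10 : 0 ≤ eps1 := by
    rw [heps1def]
    have : (0:ℝ) ≤ 2*(n:ℝ)+1 := by positivity
    nlinarith
  have hepsw0 : 0 ≤ epsw := le_trans heps10 heps1w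
  -- key inequality between error budget and epsw
  have herr_budget : eps1 + phistar ≤ 2 * epsw := by
    rw [heps1def, hepswdef]
    have h1 : (2 * (n:ℝ) + 1) ≤ 2 * ((2 * n + period n (cyl n a) : ℕ) : ℝ) := by
      push_cast
      have h2 : (1:ℝ) ≤ (n:ℝ) := by exact_mod_cast hn
      have h3 : (0:ℝ) ≤ (period n (cyl n a) : ℝ) := Nat.cast_nonneg _
      linarith
    nlinarith
  -- stationarity for windows
  have hstatN : ∀ r s : ℕ, r ≤ s → μ (Nwin n a r s) = μ (Nwin n a 0 (s - r)) := by
    intro r s hrs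
    have h2 := Nwin_measure_shift hstat n a r (s - r)
    rw [show r + (s - r) = s from by omega] at h2
    exact h2
  -- mixing wrappers specialised to our events
  have hmixNN : ∀ u ν l r s : ℕ,
      (∀ d i, 1 ≤ d → d ≤ u → i < n → i + d ≤ ν) → n ≤ ν + 1 → ν + l ≤ r →
      ((μ ((cyl n a ∩ Nwin n a 0 u) ∩ Nwin n a r s)).toReal
          ≤ aN u * ((μ (Nwin n a r s)).toReal + φ l) ∧
       aN u * ((μ (Nwin n a r s)).toReal - φ l)
          ≤ (μ ((cyl n a ∩ Nwin n a 0 u) ∩ Nwin n a r s)).toReal) := by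
    intro u ν l r s h1 h2 h3
    have hB : MeasurableSet[coordAlg (Set.Icc (0:ℤ) (ν:ℤ))] (cyl n a ∩ Nwin n a 0 u) := by
      refine MeasurableSet.inter ?_ ?_
      · have hmc := meas_shift_cyl (I := Set.Icc (0:ℤ) (ν:ℤ)) hsing 0 ?_
        · rwa [shift_zero_preimage] at hmc
        · intro i hi
          simp only [Set.mem_Icc]
          constructor <;> omega
      · refine meas_Nwin hsing 0 u ?_
        intro d i hd1 hd2 hi
        simp only [Set.mem_Icc]
        have := h1 d i hd1 hd2 hi
        constructor <;> omega
    have hC : MeasurableSet[coordAlg {i : ℤ | (ν:ℤ) + (l:ℤ) + 1 ≤ i}] (Nwin n a r s) := by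
      refine meas_Nwin hsing r s ?_
      intro d i hd1 hd2 hi
      simp only [Set.mem_setOf_eq]
      omega
    exact mix_bounds hmix l ν hB hC
  have hmixWin : ∀ u ν r s : ℕ,
      (∀ d i, 1 ≤ d → d ≤ u → i < n → i + d ≤ ν) → n ≤ ν + 1 → ν ≤ r →
      (μ ((cyl n a ∩ Nwin n a 0 u) ∩ Win n w a r s)).toReal
        ≤ aN u * (((s - r : ℕ) : ℝ) * Pstar + phistar) := by
    intro u ν r s h1 h2 h3
    have hB : MeasurableSet[coordAlg (Set.Icc (0:ℤ) (ν:ℤ))] (cyl n a ∩ Nwin n a 0 u) := by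
      refine MeasurableSet.inter ?_ ?_
      · have hmc := meas_shift_cyl (I := Set.Icc (0:ℤ) (ν:ℤ)) hsing 0 ?_
        · rwa [shift_zero_preimage] at hmc
        · intro i hi
          simp only [Set.mem_Icc]
          constructor <;> omega
      · refine meas_Nwin hsing 0 u ?_
        intro d i hd1 hd2 hi
        simp only [Set.mem_Icc]
        have := h1 d i hd1 hd2 hi
        constructor <;> omega
    have hC : MeasurableSet[coordAlg {i : ℤ | (ν:ℤ) + ((nA n (cyl n a) - w : ℕ):ℤ) + 1 ≤ i}]
        (Win n w a r s) := by
      refine meas_Win hsing w r s ?_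
      intro d i hd1 hd2 hiw hin
      simp only [Set.mem_setOf_eq]
      omega
    have h := (mix_bounds hmix (nA n (cyl n a) - w) ν hB hC).1
    have hwb := win_bound hstat n w a r s
    refine le_trans h ?_
    have h5 : (μ (Win n w a r s)).toReal ≤ ((s - r : ℕ):ℝ) * Pstar := hwb
    have h4 : (μ (Win n w a r s)).toReal + phistar ≤ ((s - r : ℕ):ℝ) * Pstar + phistar := by
      linarith
    exact mul_le_mul_of_nonneg_left h4 (haN0 u)
  have hmixWin0 : ∀ u ν r s : ℕ,
      (∀ d i, 1 ≤ d → d ≤ u → i < n → i + d ≤ ν) → ν ≤ r →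
      (μ (Nwin n a 0 u ∩ Win n w a r s)).toReal
        ≤ (μ (Nwin n a 0 u)).toReal * (((s - r : ℕ) : ℝ) * Pstar + phistar) := by
    intro u ν r s h1 h3
    have hB : MeasurableSet[coordAlg (Set.Icc (0:ℤ) (ν:ℤ))] (Nwin n a 0 u) := by
      refine meas_Nwin hsing 0 u ?_
      intro d i hd1 hd2 hi
      simp only [Set.mem_Icc]
      have := h1 d i hd1 hd2 hi
      constructor <;> omega
    have hC : MeasurableSet[coordAlg {i : ℤ | (ν:ℤ) + ((nA n (cyl n a) - w : ℕ):ℤ) + 1 ≤ i}]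
        (Win n w a r s) := by
      refine meas_Win hsing w r s ?_
      intro d i hd1 hd2 hiw hin
      simp only [Set.mem_setOf_eq]
      omega
    have h := (mix_bounds hmix (nA n (cyl n a) - w) ν hB hC).1
    have hwb := win_bound hstat n w a r s
    refine le_trans h ?_
    have h5 : (μ (Win n w a r s)).toReal ≤ ((s - r : ℕ):ℝ) * Pstar := hwb
    have h4 : (μ (Win n w a r s)).toReal + phistar ≤ ((s - r : ℕ):ℝ) * Pstar + phistar := by
      linarith
    exact mul_le_mul_of_nonneg_left h4 ENNReal.toReal_nonneg
  -- the power bound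
  have hPOW : ∀ j, 1 ≤ j → aN (t j - 2 * n) ≤ aN (m - 2 * n) * b ^ (j - 1) := by
    intro j hj
    induction j with
    | zero => omega
    | succ j ih =>
      rcases Nat.lt_or_ge j 1 with hj0 | hj1
      · have hj00 : j = 0 := by omega
        subst hj00
        rw [ht1]
        simp
      · have ihj := ih hj1
        have hTlo := htlo j
        have hTm := htm j hj1
        -- step inequality
        have hincl : cyl n a ∩ Nwin n a 0 (t (j+1) - 2*n)
            ⊆ (cyl n a ∩ Nwin n a 0 (t (j+1) - m - 2*n))
              ∩ Nwin n a (t (j+1) - m) (t (j+1) - 2*n) := by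
          rintro x ⟨hxA, hxN⟩
          exact ⟨⟨hxA, fun d hd1 hd2 => hxN d hd1 (by omega)⟩,
                 fun d hd1 hd2 => hxN d (by omega) hd2⟩
        have hmix1 := (hmixNN (t (j+1) - m - 2*n) (t (j+1) - m - n - 1) n
            (t (j+1) - m) (t (j+1) - 2*n)
            (by intro d i hd1 hd2 hi; omega) (by omega) (by omega)).1
        have hCmeas : μ (Nwin n a (t (j+1) - m) (t (j+1) - 2*n))
            = μ (Nwin n a 0 (m - 2*n)) := by
          rw [hstatN _ _ (by omega)]
          have harith : t (j+1) - 2*n - (t (j+1) - m) = m - 2*n := by omega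
          rw [harith]
        have hmono : aN (t (j+1) - 2*n)
            ≤ (μ ((cyl n a ∩ Nwin n a 0 (t (j+1) - m - 2*n))
                ∩ Nwin n a (t (j+1) - m) (t (j+1) - 2*n))).toReal :=
          ENNReal.toReal_mono (measure_ne_top μ _) (measure_mono hincl)
        rw [hCmeas] at hmix1
        have hstep : aN (t (j+1) - 2*n) ≤ aN (t (j+1) - m - 2*n) * b := by
          rw [hbdef, hQdef]
          exact le_trans hmono hmix1
        have haNm : aN (t (j+1) - m - 2*n) ≤ aN (t j - 2*n) := haN_mono (by omega)
        calc aN (t (j+1) - 2*n) ≤ aN (t (j+1) - m - 2*n) * b := hstep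
          _ ≤ aN (t j - 2*n) * b := mul_le_mul_of_nonneg_right haNm hb0
          _ ≤ (aN (m - 2*n) * b ^ (j - 1)) * b := mul_le_mul_of_nonneg_right ihj hb0
          _ = aN (m - 2*n) * b ^ (j + 1 - 1) := by
              rw [mul_assoc, ← pow_succ]
              congr 2
              omega
  -- the one-step factorization estimate
  have hKEY : ∀ j, 1 ≤ j → |aN (t (j+1)) - aN (t j) * βR|
      ≤ (eps1 + phistar) * (aN (m - 2*n) * b ^ (j-1)) := by
    intro j hj
    have hTlo := htlo j
    have hThi := hthi j
    have hTm := htm j hj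
    have hinclU : cyl n a ∩ Nwin n a 0 (t (j+1))
        ⊆ (cyl n a ∩ Nwin n a 0 (t j)) ∩ Nwin n a (t j + 2*n + 1) (t (j+1)) := by
      rintro x ⟨hxA, hxN⟩
      exact ⟨⟨hxA, fun d hd1 hd2 => hxN d hd1 (by omega)⟩,
             fun d hd1 hd2 => hxN d (by omega) hd2⟩
    have hmixC := hmixNN (t j) (t j + n) (nA n (cyl n a) - w) (t j + 2*n + 1) (t (j+1))
        (by intro d i hd1 hd2 hi; omega) (by omega) (by omega)
    have hCval : μ (Nwin n a (t j + 2*n + 1) (t (j+1)))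
        = μ (Nwin n a 0 (t (j+1) - (t j + 2*n + 1))) := hstatN _ _ (by omega)
    have hCub : (μ (Nwin n a (t j + 2*n+1) (t (j+1)))).toReal
        ≤ (μ (Nwin n a 0 (m - 2*n - 1))).toReal := by
      rw [hCval]
      exact ENNReal.toReal_mono (measure_ne_top μ _)
        (measure_mono (Nwin_anti n a (by omega)))
    have hClb : βR ≤ (μ (Nwin n a (t j + 2*n+1) (t (j+1)))).toReal := by
      rw [hCval, hβdef]
      exact ENNReal.toReal_mono (measure_ne_top μ _)
        (measure_mono (Nwin_anti n a (by omega)))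
    -- the unconditional short-window estimate
    have hD : (μ (Nwin n a 0 (m - 2*n - 1))).toReal ≤ βR + eps1 := by
      have hsplit : Nwin n a 0 (m - 2*n - 1)
          ⊆ Nwin n a 0 m ∪ (Nwin n a 0 (m - 3*n) ∩ Win n w a (m - 2*n - 1) m) := by
        intro x hx
        by_cases hxm : x ∈ Nwin n a 0 m
        · exact Or.inl hxm
        · refine Or.inr ⟨fun d hd1 hd2 => hx d hd1 (by omega), ?_⟩
          simp only [Nwin, Set.mem_setOf_eq] at hxm
          push_neg at hxm
          obtain ⟨d, hd1, hd2, hd3⟩ := hxm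
          have hdgt : m - 2*n - 1 < d := by
            by_contra hle
            exact (hx d hd1 (by omega)) hd3
          exact Set.mem_biUnion (show d ∈ Set.Ioc (m-2*n-1) m from ⟨hdgt, hd2⟩)
            (cyl_subset_cylLast n w a hd3)
      have hm1 : (μ (Nwin n a 0 (m - 2*n - 1))).toReal
          ≤ (μ (Nwin n a 0 m)).toReal
            + (μ (Nwin n a 0 (m - 3*n) ∩ Win n w a (m - 2*n - 1) m)).toReal := by
        have h4 := le_trans (measure_mono hsplit)
          (measure_union_le (μ := μ) (Nwin n a 0 m)
            (Nwin n a 0 (m - 3*n) ∩ Win n w a (m - 2*n - 1) m))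
        refine le_trans (ENNReal.toReal_mono ?_ h4) ?_
        · exact ENNReal.add_ne_top.mpr ⟨measure_ne_top μ _, measure_ne_top μ _⟩
        · rw [ENNReal.toReal_add (measure_ne_top μ _) (measure_ne_top μ _)]
      have hm2 := hmixWin0 (m - 3*n) (m - 2*n - 1) (m - 2*n - 1) m
        (by intro d i hd1 hd2 hi; omega) le_rfl
      have hcard : ((m - (m - 2*n - 1) : ℕ) : ℝ) = 2*(n:ℝ)+1 := by
        have h5 : m - (m - 2*n - 1) = 2*n+1 := by omega
        rw [h5]; push_cast; ring
      rw [hcard] at hm2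
      have hNle1 : (μ (Nwin n a 0 (m - 3*n))).toReal ≤ 1 :=
        ENNReal.toReal_mono ENNReal.one_ne_top prob_le_one
      have hwin_le : (μ (Nwin n a 0 (m-3*n) ∩ Win n w a (m-2*n-1) m)).toReal ≤ eps1 := by
        rw [heps1def]
        refine le_trans hm2 ?_
        have hnn : 0 ≤ (2*(n:ℝ)+1) * Pstar + phistar := by
          rw [← heps1def]; exact heps10
        nlinarith [ENNReal.toReal_nonneg (a := μ (Nwin n a 0 (m-3*n)))]
      rw [hβdef]
      linarith
    have hmonoU : aN (t (j+1))
        ≤ (μ ((cyl n a ∩ Nwin n a 0 (t j)) ∩ Nwin n a (t j + 2*n+1) (t (j+1)))).toReal :=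
      ENNReal.toReal_mono (measure_ne_top μ _) (measure_mono hinclU)
    have hupper : aN (t (j+1)) - aN (t j) * βR ≤ aN (t j) * (eps1 + phistar) := by
      have h1 := hmixC.1
      have h2 : aN (t (j+1))
          ≤ aN (t j) * ((μ (Nwin n a (t j + 2*n+1) (t (j+1)))).toReal + phistar) :=
        le_trans hmonoU h1
      have h3 : (μ (Nwin n a (t j + 2*n+1) (t (j+1)))).toReal ≤ βR + eps1 :=
        le_trans hCub hD
      nlinarith [haN0 (t j)]
    have hinclL : (cyl n a ∩ Nwin n a 0 (t j)) ∩ Nwin n a (t j + 2*n+1) (t (j+1))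
        ⊆ (cyl n a ∩ Nwin n a 0 (t (j+1)))
          ∪ ((cyl n a ∩ Nwin n a 0 (t j + 1 - n)) ∩ Win n w a (t j) (t j + 2*n+1)) := by
      rintro x ⟨⟨hxA, hxN⟩, hxC⟩
      by_cases hxw : x ∈ Nwin n a (t j) (t j + 2*n+1)
      · refine Or.inl ⟨hxA, fun d hd1 hd2 => ?_⟩
        rcases Nat.lt_or_ge (t j) d with h | h
        · rcases Nat.lt_or_ge (t j + 2*n+1) d with h' | h'
          · exact hxC d h' hd2
          · exact hxw d h h'
        · exact hxN d hd1 h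
      · simp only [Nwin, Set.mem_setOf_eq] at hxw
        push_neg at hxw
        obtain ⟨d, hd1, hd2, hd3⟩ := hxw
        refine Or.inr ⟨⟨hxA, fun d' hd1' hd2' => hxN d' hd1' (by omega)⟩, ?_⟩
        exact Set.mem_biUnion (show d ∈ Set.Ioc (t j) (t j + 2*n+1) from ⟨hd1, hd2⟩)
          (cyl_subset_cylLast n w a hd3)
    have hwin2 := hmixWin (t j + 1 - n) (t j) (t j) (t j + 2*n+1)
        (by intro d i hd1 hd2 hi; omega) (by omega) le_rfl
    have hcard2 : ((t j + 2*n+1 - t j : ℕ):ℝ) = 2*(n:ℝ)+1 := by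
      have h5 : t j + 2*n+1 - t j = 2*n+1 := by omega
      rw [h5]; push_cast; ring
    rw [hcard2] at hwin2
    have hsplitL : (μ ((cyl n a ∩ Nwin n a 0 (t j)) ∩ Nwin n a (t j + 2*n+1) (t (j+1)))).toReal
        ≤ aN (t (j+1))
          + (μ ((cyl n a ∩ Nwin n a 0 (t j + 1 - n)) ∩ Win n w a (t j) (t j + 2*n+1))).toReal := by
      have h4 := le_trans (measure_mono hinclL)
        (measure_union_le (μ := μ) (cyl n a ∩ Nwin n a 0 (t (j+1)))
          ((cyl n a ∩ Nwin n a 0 (t j + 1 - n)) ∩ Win n w a (t j) (t j + 2*n+1)))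
      refine le_trans (ENNReal.toReal_mono ?_ h4) ?_
      · exact ENNReal.add_ne_top.mpr ⟨measure_ne_top μ _, measure_ne_top μ _⟩
      · rw [ENNReal.toReal_add (measure_ne_top μ _) (measure_ne_top μ _)]
    have hlower : aN (t j) * βR - aN (t (j+1))
        ≤ aN (t j) * phistar + aN (t j + 1 - n) * eps1 := by
      have h1 := hmixC.2
      have h2 : aN (t j) * (βR - phistar)
          ≤ (μ ((cyl n a ∩ Nwin n a 0 (t j)) ∩ Nwin n a (t j + 2*n+1) (t (j+1)))).toReal := by
        refine le_trans ?_ h1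
        nlinarith [haN0 (t j), hClb]
      have h3 : (μ ((cyl n a ∩ Nwin n a 0 (t j + 1 - n)) ∩ Win n w a (t j) (t j + 2*n+1))).toReal
          ≤ aN (t j + 1 - n) * eps1 := by
        rw [heps1def]; exact hwin2
      nlinarith [hsplitL]
    have hPOWj := hPOW j hj
    have haN1 : aN (t j) ≤ aN (t j - 2*n) := haN_mono (by omega)
    have haN2 : aN (t j + 1 - n) ≤ aN (t j - 2*n) := haN_mono (by omega)
    have hEnn : 0 ≤ eps1 + phistar := by linarith
    rw [abs_le]
    constructor
    · have h5 : aN (t j) * phistar + aN (t j + 1 - n) * eps1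
          ≤ aN (t j - 2*n) * (eps1 + phistar) := by
        nlinarith [haN0 (t j), haN0 (t j + 1 - n), haN0 (t j - 2*n)]
      have h4 : aN (t j - 2*n) * (eps1+phistar) ≤ (aN (m-2*n) * b^(j-1)) * (eps1+phistar) :=
        mul_le_mul_of_nonneg_right hPOWj hEnn
      nlinarith [hlower]
    · have h4 : aN (t j) * (eps1+phistar) ≤ (aN (m-2*n) * b^(j-1)) * (eps1+phistar) :=
        mul_le_mul_of_nonneg_right (le_trans haN1 hPOWj) hEnn
      nlinarith [hupper]
  -- telescoping induction
  have hbpow_nn : ∀ i:ℕ, 0 ≤ b ^ i := fun i => pow_nonneg hb0 i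
  have hG : ∀ j, 1 ≤ j → |aN (t j) - aN m * βR ^ (j-1)|
      ≤ 2 * epsw * ((j-1 : ℕ):ℝ) * aN (m - 2*n) * b ^ (j-2) := by
    intro j hj
    induction j with
    | zero => omega
    | succ j ih =>
      rcases Nat.lt_or_ge j 1 with hj0 | hj1
      · have hj00 : j = 0 := by omega
        subst hj00
        rw [ht1]
        simp
      · have ih1 := ih hj1
        have hK := hKEY j hj1
        have hexp : βR ^ (j+1-1) = βR ^ (j-1) * βR := by
          rw [← pow_succ]
          congr 1
          omega
        have htri : |aN (t (j+1)) - aN m * βR ^ (j+1-1)|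
            ≤ |aN (t (j+1)) - aN (t j) * βR| + |aN (t j) - aN m * βR ^ (j-1)| * βR := by
          calc |aN (t (j+1)) - aN m * βR ^ (j+1-1)|
              = |(aN (t (j+1)) - aN (t j) * βR) + (aN (t j) - aN m * βR ^ (j-1)) * βR| := by
                rw [hexp]; ring_nf
            _ ≤ |aN (t (j+1)) - aN (t j) * βR| + |(aN (t j) - aN m * βR ^ (j-1)) * βR| :=
                abs_add_le _ _
            _ = |aN (t (j+1)) - aN (t j) * βR| + |aN (t j) - aN m * βR ^ (j-1)| * βR := by
                rw [abs_mul, abs_of_nonneg hβ0]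
        have hKb : |aN (t (j+1)) - aN (t j) * βR| ≤ 2*epsw * (aN (m-2*n) * b^(j-1)) := by
          refine le_trans hK ?_
          have h6 := mul_le_mul_of_nonneg_right herr_budget
            (mul_nonneg (haN0 (m-2*n)) (hbpow_nn (j-1)))
          nlinarith
        have hIH : |aN (t j) - aN m * βR^(j-1)| * βR
            ≤ 2*epsw*((j-1:ℕ):ℝ)* aN (m-2*n) * b^(j-1) := by
          rcases Nat.lt_or_ge j 2 with hj2 | hj2
          · have hj11 : j = 1 := by omega
            subst hj11
            have h0 : ((1-1 : ℕ):ℝ) = 0 := by norm_num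
            rw [h0] at ih1 ⊢
            have h7 := mul_le_mul_of_nonneg_right ih1 hβ0
            nlinarith [abs_nonneg (aN (t 1) - aN m * βR ^ (1-1))]
          · have h5 : βR * b^(j-2) ≤ b^(j-1) := by
              have h8 : b^(j-1) = b^(j-2) * b := by
                rw [← pow_succ]
                congr 1
                omega
              rw [h8]
              nlinarith [hbpow_nn (j-2)]
            have h7 := mul_le_mul_of_nonneg_right ih1 hβ0
            have h9 : 2*epsw*((j-1:ℕ):ℝ) * aN (m-2*n) * b^(j-2) * βR
                ≤ 2*epsw*((j-1:ℕ):ℝ) * aN (m-2*n) * b^(j-1) := by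
              have h10 : 0 ≤ 2*epsw*((j-1:ℕ):ℝ) * aN (m-2*n) :=
                mul_nonneg (mul_nonneg (by linarith) (Nat.cast_nonneg _)) (haN0 _)
              nlinarith [h5, h10, hbpow_nn (j-2)]
            linarith
        have hsum := add_le_add hKb hIH
        refine le_trans htri (le_trans hsum ?_)
        have he2 : ((j+1-1:ℕ):ℝ) = ((j-1:ℕ):ℝ) + 1 := by
          have h11 : j+1-1 = (j-1)+1 := by omega
          rw [h11]
          push_cast
          ring
        have he1 : (j+1) - 2 = j - 1 := by omega
        rw [he1, he2]
        have : 2*epsw*(aN (m-2*n) * b^(j-1)) + 2*epsw*((j-1:ℕ):ℝ)*aN (m-2*n)*b^(j-1)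
            = 2*epsw*(((j-1:ℕ):ℝ)+1)*aN (m-2*n)*b^(j-1) := by ring
        linarith
  exact hG k hk

end Main

set_option maxHeartbeats 2000000

/-- **Proposition (key factorization).**  With `f_A = 1/(2ℙ(A))`: for every integer
`k ≥ 1`, `|ℙ_A(τ_A > k f_A) - ℙ_A(τ_A > f_A) ℙ(τ_A > f_A)^(k-1)| ≤
2 ε(A) (k-1) ℙ_A(τ_A > f_A - 2n) [ℙ(τ_A > f_A - 2n) + φ(n)]^(k-2)`. -/
theorem key_factorization [Fintype 𝒞] [Nonempty 𝒞] [MeasurableSpace 𝒞]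
    (μ : MeasureTheory.Measure (Omega 𝒞)) [IsProbabilityMeasure μ] (hstat : Stationary μ)
    (φ : ℕ → ℝ) (hmix : IsPhiMixing μ φ)
    (n : ℕ) (hn : 1 ≤ n) (a : ℕ → 𝒞) (hA : 0 < μ (cyl n a))
    (k : ℕ) (hk : 1 ≤ k) (fA : ℝ) (hfA : fA = 1 / (2 * (μ (cyl n a)).toReal)) :
    |(μ[|cyl n a] (tauGT (cyl n a) ((k : ℝ) * fA))).toReal
        - (μ[|cyl n a] (tauGT (cyl n a) fA)).toReal
            * (μ (tauGT (cyl n a) fA)).toReal ^ (k - 1)|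
      ≤ 2 * epsA μ φ n a * ((k : ℝ) - 1)
          * (μ[|cyl n a] (tauGT (cyl n a) (fA - 2 * n))).toReal
          * ((μ (tauGT (cyl n a) (fA - 2 * n))).toReal + φ n) ^ (k - 2) := by
  classical
  have hPA0 : (μ (cyl n a)) ≠ 0 := hA.ne'
  have hPAtop : (μ (cyl n a)) ≠ ⊤ := measure_ne_top μ _
  have hPA : 0 < (μ (cyl n a)).toReal := ENNReal.toReal_pos hPA0 hPAtop
  have hfA0 : 0 < fA := by
    rw [hfA]
    positivity
  have hepsnn : 0 ≤ epsA μ φ n a := epsA_nonneg hmix n a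
  have hphin : 0 ≤ φ n := phi_nonneg hmix n
  -- trivial case k = 1
  rcases Nat.lt_or_ge k 2 with hk2 | hk2
  · have hk1 : k = 1 := by omega
    subst hk1
    simp only [Nat.cast_one, one_mul, Nat.sub_self, pow_zero, mul_one, sub_self, abs_zero]
    have h0 : (2 : ℝ) * epsA μ φ n a * 0
        * (μ[|cyl n a] (tauGT (cyl n a) (fA - 2 * n))).toReal
        * ((μ (tauGT (cyl n a) (fA - 2 * n))).toReal + φ n) ^ (1 - 2) = 0 := by
      ring
    rw [h0]
  -- k ≥ 2 from now on
  by_cases hsing : ∀ i < n, MeasurableSet ({a i} : Set 𝒞)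
  case neg =>
    -- degenerate alphabet: all hitting-time events have full measure
    push_neg at hsing
    obtain ⟨i₀, hi₀, hnm⟩ := hsing
    have hSat : ∃ c, c ≠ a i₀ ∧ ∀ S : Set 𝒞, MeasurableSet S → a i₀ ∈ S → c ∈ S := by
      by_contra hno
      push_neg at hno
      apply hnm
      choose! S hS1 hS2 hS3 using hno
      have hsingl : ({a i₀} : Set 𝒞) = ⋂ (c : 𝒞) (_ : c ≠ a i₀), S c := by
        ext v
        simp only [Set.mem_singleton_iff, Set.mem_iInter]
        constructor
        · rintro rfl c hcne
          exact hS2 c hcne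
        · intro hv
          by_contra hne
          exact hS3 v hne (hv v hne)
      rw [hsingl]
      exact MeasurableSet.biInter (Set.to_countable _) fun c hc => hS1 c hc
    obtain ⟨c, hc, hcin⟩ := hSat
    obtain ⟨htau1, htau2⟩ := degenerate_case (μ := μ) hi₀ hc hcin
    have hcond1 : ∀ t : ℝ, (μ[|cyl n a] (tauGT (cyl n a) t)).toReal = 1 := by
      intro t
      rw [cond_eq_inv_mul, htau2 t, ENNReal.inv_mul_cancel hPA0 hPAtop]
      simp
    have h2 : ∀ t : ℝ, (μ (tauGT (cyl n a) t)).toReal = 1 := by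
      intro t
      rw [htau1 t]
      simp
    simp only [hcond1, h2, one_pow, mul_one, sub_self, abs_zero]
    have hb : (0:ℝ) ≤ 1 + φ n := by linarith
    have hknn : (0:ℝ) ≤ (k : ℝ) - 1 := by
      have : (1:ℝ) ≤ (k : ℝ) := by exact_mod_cast hk
      linarith
    have := pow_nonneg hb (k - 2)
    positivity
  case pos =>
  -- now the cylinder and all events are measurable
  have hmeasA : MeasurableSet (cyl n a) := meas_cyl hsing
  have hcondP : IsProbabilityMeasure (μ[|cyl n a]) := cond_isProbabilityMeasure hPA0
  have hcond_le1 : ∀ S : Set (Omega 𝒞), (μ[|cyl n a] S).toReal ≤ 1 := fun S =>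
    ENNReal.toReal_mono ENNReal.one_ne_top prob_le_one
  have hcond_nn : ∀ S : Set (Omega 𝒞), 0 ≤ (μ[|cyl n a] S).toReal := fun S =>
    ENNReal.toReal_nonneg
  have hP_le1 : ∀ S : Set (Omega 𝒞), (μ S).toReal ≤ 1 := fun S =>
    ENNReal.toReal_mono ENNReal.one_ne_top prob_le_one
  have hkR : (2:ℝ) ≤ (k : ℝ) := by exact_mod_cast hk2
  by_cases hcaseA : fA < 2 * (n : ℝ) + 1
  · -- `fA` small: the right-hand side exceeds 1
    have htuniv : tauGT (cyl n a) (fA - 2 * n) = Set.univ := by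
      ext x
      simp only [tauGT, Set.mem_setOf_eq, Set.mem_univ, iff_true]
      intro j hj1 hj2 _
      have : (1:ℝ) ≤ (j:ℝ) := by exact_mod_cast hj1
      linarith
    have hQA1 : (μ[|cyl n a] (tauGT (cyl n a) (fA - 2 * n))).toReal = 1 := by
      rw [htuniv]
      have : (μ[|cyl n a] Set.univ) = 1 := measure_univ
      rw [this]
      simp
    have hQ1 : (μ (tauGT (cyl n a) (fA - 2 * n))).toReal = 1 := by
      rw [htuniv, measure_univ]
      simp
    rw [hQA1, hQ1]
    have hPAbig : 1 / (2 * (2 * (n:ℝ) + 1)) < (μ (cyl n a)).toReal := by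
      have h1 : fA = 1 / (2 * (μ (cyl n a)).toReal) := hfA
      rw [h1] at hcaseA
      rw [div_lt_iff₀ (by positivity)] at hcaseA
      rw [div_lt_iff₀ (by positivity)]
      nlinarith
    have heps_big : 1 < 2 * epsA μ φ n a := by
      have h1 := epsA_ge hmix n hn a
      have h2 : (0:ℝ) < 2 * (n:ℝ) + 1 := by positivity
      have h3 : (2 * (n:ℝ) + 1) * (1 / (2 * (2 * (n:ℝ) + 1))) = 1/2 := by
        field_simp
      have h4 := mul_lt_mul_of_pos_left hPAbig h2
      linarith
    have hLHS : |(μ[|cyl n a] (tauGT (cyl n a) ((k : ℝ) * fA))).toReal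
        - (μ[|cyl n a] (tauGT (cyl n a) fA)).toReal
            * (μ (tauGT (cyl n a) fA)).toReal ^ (k - 1)| ≤ 1 := by
      have hx := hcond_le1 (tauGT (cyl n a) ((k : ℝ) * fA))
      have hx0 := hcond_nn (tauGT (cyl n a) ((k : ℝ) * fA))
      have hy := hcond_le1 (tauGT (cyl n a) fA)
      have hy0 := hcond_nn (tauGT (cyl n a) fA)
      have hz : 0 ≤ (μ (tauGT (cyl n a) fA)).toReal := ENNReal.toReal_nonneg
      have hz1 : (μ (tauGT (cyl n a) fA)).toReal ^ (k-1) ≤ 1 :=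
        pow_le_one₀ hz (hP_le1 _)
      have hz0 : 0 ≤ (μ (tauGT (cyl n a) fA)).toReal ^ (k-1) := pow_nonneg hz _
      rw [abs_le]
      constructor <;> nlinarith
    have hRHS : 1 ≤ 2 * epsA μ φ n a * ((k : ℝ) - 1) * 1 * (1 + φ n) ^ (k - 2) := by
      have h1 : (1:ℝ) ≤ (1 + φ n) ^ (k - 2) := one_le_pow₀ (by linarith)
      have p1 : (1:ℝ) ≤ 2 * epsA μ φ n a * ((k : ℝ) - 1) := by nlinarith
      nlinarith [mul_nonneg (sub_nonneg.2 p1) (sub_nonneg.2 h1)]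
    linarith
  · -- main case
    push_neg at hcaseA
    set m := ⌊fA⌋₊ with hmdef
    have hmle : (m:ℝ) ≤ fA := Nat.floor_le hfA0.le
    have hmlt : fA < (m:ℝ) + 1 := Nat.lt_floor_add_one fA
    have hmge : 2*n+1 ≤ m := by
      apply Nat.le_floor
      push_cast
      linarith
    set t : ℕ → ℕ := fun j => ⌊(j:ℝ) * fA⌋₊ with htdef
    have ht1 : t 1 = m := by simp [htdef, hmdef]
    have htlo : ∀ j, t j + m ≤ t (j+1) := by
      intro j
      apply Nat.le_floor
      have h1 : ((t j : ℕ):ℝ) ≤ (j:ℝ)*fA :=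
        Nat.floor_le (mul_nonneg (Nat.cast_nonneg _) hfA0.le)
      push_cast
      nlinarith [hmle, h1]
    have hthi : ∀ j, t (j+1) ≤ t j + m + 1 := by
      intro j
      have h2 : (j:ℝ)*fA < (t j : ℝ) + 1 := Nat.lt_floor_add_one _
      have h5 : ((j+1:ℕ):ℝ) * fA < ((t j + m + 2 : ℕ):ℝ) := by
        push_cast
        nlinarith [hmlt]
      have h6 : t (j+1) < t j + m + 2 := by
        rw [htdef]
        exact (Nat.floor_lt (mul_nonneg (Nat.cast_nonneg _) hfA0.le)).mpr h5
      omega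
    have htm : ∀ j, 1 ≤ j → m ≤ t j := by
      intro j hj
      apply Nat.le_floor
      have h7 : (1:ℝ) ≤ (j:ℝ) := by exact_mod_cast hj
      nlinarith [hmle, hfA0]
    obtain ⟨w, hwmem, hweq⟩ := Finset.exists_mem_eq_inf'
      (Finset.nonempty_Iic (a := nA n (cyl n a)))
      (fun w => ((2 * n + period n (cyl n a) : ℕ) : ℝ) * (μ (cylLast n w a)).toReal
         + φ (nA n (cyl n a) - w))
    have hwle : w ≤ nA n (cyl n a) := Finset.mem_Iic.mp hwmem
    have hepseq : epsA μ φ n a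
        = ((2 * n + period n (cyl n a) : ℕ) : ℝ) * (μ (cylLast n w a)).toReal
          + φ (nA n (cyl n a) - w) := hweq
    have hmain := main_estimate hstat hmix n hn a hsing w hwle m hmge t ht1 htlo hthi htm k hk
    have he1 : tauGT (cyl n a) ((k:ℝ)*fA) = Nwin n a 0 (t k) := by
      rw [tauGT_eq_Nwin n a (mul_nonneg (Nat.cast_nonneg _) hfA0.le)]
    have he2 : tauGT (cyl n a) fA = Nwin n a 0 m := by
      rw [tauGT_eq_Nwin n a hfA0.le]
    have he3 : tauGT (cyl n a) (fA - 2*(n:ℝ)) = Nwin n a 0 (m - 2*n) := by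
      rw [tauGT_eq_Nwin n a (by linarith)]
      have h8 : fA - 2*(n:ℝ) = fA - ((2*n : ℕ):ℝ) := by push_cast; ring
      rw [h8, Nat.floor_sub_natCast]
    have hcondeq : ∀ S : Set (Omega 𝒞), (μ[|cyl n a] S).toReal
        = (μ (cyl n a ∩ S)).toReal / (μ (cyl n a)).toReal := by
      intro S
      rw [cond_apply hmeasA μ S, ENNReal.toReal_mul, ENNReal.toReal_inv]
      ring
    rw [he1, he2, he3, hepseq, hcondeq, hcondeq, hcondeq]
    set X := (μ (cyl n a ∩ Nwin n a 0 (t k))).toReal with hX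
    set Y := (μ (cyl n a ∩ Nwin n a 0 m)).toReal with hY
    set Z := (μ (cyl n a ∩ Nwin n a 0 (m - 2*n))).toReal with hZ
    set βv := (μ (Nwin n a 0 m)).toReal with hβv
    set E := ((2 * n + period n (cyl n a) : ℕ) : ℝ) * (μ (cylLast n w a)).toReal
          + φ (nA n (cyl n a) - w) with hE
    set PA := (μ (cyl n a)).toReal with hPAdef
    have hcast : ((k-1:ℕ):ℝ) = (k:ℝ) - 1 := by
      rw [Nat.cast_sub hk]
      norm_num
    have hLeq : |X/PA - Y/PA*βv^(k-1)| = |X - Y*βv^(k-1)| / PA := by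
      rw [div_mul_eq_mul_div, div_sub_div_same, abs_div, abs_of_pos hPA]
    rw [hLeq, div_le_iff₀ hPA]
    have hcollapse : 2*E*((k:ℝ)-1)*(Z/PA)*((μ (Nwin n a 0 (m - 2*n))).toReal + φ n)^(k-2)*PA
        = 2*E*((k:ℝ)-1)*Z*((μ (Nwin n a 0 (m - 2*n))).toReal + φ n)^(k-2) := by
      field_simp
    rw [hcollapse, ← hcast]
    exact hmain

end ReturnTimes
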